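/- Let c ≥ 1, let β⁺, β⁻: {−1,+1}^c → (0,∞) be positive penalty functions, and let P be any probability distribution on {−1,+1}^c. Consider the conditional surrogate risk f ↦ Σ_{y∈{−1,+1}^c} P(y)·L_u(f,y) with base loss ℓ(z) = (max{0, 1−z})². Then the point f* ∈ ℝ^c with f*_j = (φ_j^+(P) − φ_j^-(P))/(φ_j^+(P) + φ_j^-(P)) is a global minimizer, with minimum value Σ_{j=1}^c 4·φ_j^+(P)·φ_j^-(P)/(φ_j^+(P) + φ_j^-(P)); moreover, if φ_j^+(P) > 0 and φ_j^-(P) > 0 for every j, then f* is the unique global minimizer. -/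
import Mathlib


open scoped BigOperators

/-- The sign value of a Boolean label: `true ↦ +1`, `false ↦ -1`. -/
def toSign (b : Bool) : ℝ := if b then 1 else -1

/-- The general reweighted univariate surrogate loss `L_u`. -/
noncomputable def Lu {c : ℕ} (βp βm : (Fin c → Bool) → ℝ) (ℓ : ℝ → ℝ)
    (v : Fin c → ℝ) (y : Fin c → Bool) : ℝ :=
  ∑ j, (if y j then βp y else βm y) * ℓ (toSign (y j) * v j)

/-- The conditional surrogate risk. -/
noncomputable def risk {c : ℕ} (βp βm : (Fin c → Bool) → ℝ) (ℓ : ℝ → ℝ)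
    (P : (Fin c → Bool) → ℝ) (f : Fin c → ℝ) : ℝ :=
  ∑ y, P y * Lu βp βm ℓ f y

/-- `φ_j^+(P)`. -/
def phiP {c : ℕ} (β P : (Fin c → Bool) → ℝ) (j : Fin c) : ℝ :=
  ∑ y ∈ Finset.univ.filter (fun y : Fin c → Bool => y j = true), β y * P y

/-- `φ_j^-(P)`. -/
def phiM {c : ℕ} (β P : (Fin c → Bool) → ℝ) (j : Fin c) : ℝ :=
  ∑ y ∈ Finset.univ.filter (fun y : Fin c → Bool => y j = false), β y * P y


lemma risk_eq {c : ℕ} (βp βm : (Fin c → Bool) → ℝ) (ℓ : ℝ → ℝ)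
    (P : (Fin c → Bool) → ℝ) (f : Fin c → ℝ) :
    risk βp βm ℓ P f = ∑ j, (phiP βp P j * ℓ (f j) + phiM βm P j * ℓ (-(f j))) := by
  unfold risk Lu phiP phiM
  simp_rw [Finset.mul_sum]
  rw [Finset.sum_comm]
  refine Finset.sum_congr rfl fun j _ => ?_
  rw [Finset.sum_mul, Finset.sum_mul,
    ← Finset.sum_filter_add_sum_filter_not Finset.univ (fun y => y j = true)]
  congr 1
  · refine Finset.sum_congr rfl fun y hy => ?_
    simp only [Finset.mem_filter] at hy
    simp [hy.2, toSign]; ring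
  · refine Finset.sum_congr (by simp) fun y hy => ?_
    simp only [Finset.mem_filter, Bool.not_eq_true] at hy
    simp [hy.2, toSign]; ring

lemma tangent2 (b cc z : ℝ) (hb : 0 ≤ b) (hc : 0 ≤ cc) :
    4*b*cc*z - 4*b^2 ≤ cc^2 * (max 0 z)^2 := by
  rcases le_or_gt z 0 with h | h
  · rw [max_eq_left h]
    nlinarith [mul_nonpos_of_nonneg_of_nonpos (mul_nonneg hb hc) h, sq_nonneg b]
  · rw [max_eq_right h.le]; nlinarith [sq_nonneg (cc*z - 2*b)]

lemma key_lb (a b t : ℝ) (ha : 0 ≤ a) (hb : 0 ≤ b) (hab : 0 < a + b) :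
    4*a*b/(a+b) ≤ a * (max 0 (1-t))^2 + b * (max 0 (1+t))^2 := by
  have h1 := tangent2 b (a+b) (1-t) hb hab.le
  have h2 := tangent2 a (a+b) (1+t) ha hab.le
  rw [div_le_iff₀ hab]
  nlinarith [mul_le_mul_of_nonneg_left h1 ha, mul_le_mul_of_nonneg_left h2 hb,
    sq_nonneg (a+b), mul_nonneg ha (sq_nonneg (max 0 (1-t))),
    mul_nonneg hb (sq_nonneg (max 0 (1+t)))]

lemma key_eq (a b : ℝ) (ha : 0 ≤ a) (hb : 0 ≤ b) (hab : 0 < a + b) :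
    a * (max 0 (1-(a-b)/(a+b)))^2 + b * (max 0 (1+(a-b)/(a+b)))^2 = 4*a*b/(a+b) := by
  have h1 : 1 - (a-b)/(a+b) = 2*b/(a+b) := by field_simp; ring
  have h2 : 1 + (a-b)/(a+b) = 2*a/(a+b) := by field_simp; ring
  rw [h1, h2, max_eq_right (by positivity), max_eq_right (by positivity)]
  field_simp
  ring

lemma key_uniq (a b t : ℝ) (ha : 0 < a) (hb : 0 < b)
    (h : a * (max 0 (1-t))^2 + b * (max 0 (1+t))^2 = 4*a*b/(a+b)) :
    t = (a-b)/(a+b) := by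
  have hab : 0 < a + b := by linarith
  have h1 := tangent2 b (a+b) (1-t) hb.le hab.le
  have h2 := tangent2 a (a+b) (1+t) ha.le hab.le
  have hh : (a+b) * (a * (max 0 (1-t))^2 + b * (max 0 (1+t))^2) = 4*a*b := by
    rw [h]; field_simp
  -- slack1 = (a+b)^2 * M1 - (4b(a+b)(1-t) - 4b^2) = 0
  have hs1 : (a+b)^2 * (max 0 (1-t))^2 = 4*b*(a+b)*(1-t) - 4*b^2 := by
    nlinarith [mul_le_mul_of_nonneg_left h1 ha.le, mul_le_mul_of_nonneg_left h2 hb.le]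
  rcases le_or_gt (1-t) 0 with hz | hz
  · rw [max_eq_left hz] at hs1
    nlinarith [mul_nonpos_of_nonneg_of_nonpos hb.le
      (mul_nonpos_of_nonneg_of_nonpos hab.le hz), mul_pos hb hb]
  · rw [max_eq_right hz.le] at hs1
    have : ((a+b)*(1-t) - 2*b)^2 = 0 := by nlinarith
    have h3 : (a+b)*(1-t) = 2*b := by
      have := pow_eq_zero_iff (n := 2) (by norm_num) |>.mp this
      linarith
    field_simp
    nlinarith

lemma phiP_nonneg {c : ℕ} (β P : (Fin c → Bool) → ℝ) (hβ : ∀ y, 0 < β y)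
    (hP : ∀ y, 0 ≤ P y) (j : Fin c) : 0 ≤ phiP β P j :=
  Finset.sum_nonneg fun y _ => mul_nonneg (hβ y).le (hP y)

lemma phiM_nonneg {c : ℕ} (β P : (Fin c → Bool) → ℝ) (hβ : ∀ y, 0 < β y)
    (hP : ∀ y, 0 ≤ P y) (j : Fin c) : 0 ≤ phiM β P j :=
  Finset.sum_nonneg fun y _ => mul_nonneg (hβ y).le (hP y)

lemma phi_sum_pos {c : ℕ} (βp βm P : (Fin c → Bool) → ℝ) (hβp : ∀ y, 0 < βp y)
    (hβm : ∀ y, 0 < βm y) (hP : ∀ y, 0 ≤ P y) (hP1 : (∑ y, P y) = 1) (j : Fin c) :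
    0 < phiP βp P j + phiM βm P j := by
  have hsum : phiP βp P j + phiM βm P j
      = ∑ y, (if y j then βp y else βm y) * P y := by
    unfold phiP phiM
    rw [← Finset.sum_filter_add_sum_filter_not Finset.univ (fun y => y j = true)
      (fun y => (if y j then βp y else βm y) * P y)]
    congr 1
    · exact Finset.sum_congr rfl fun y hy => by
        simp only [Finset.mem_filter] at hy; simp [hy.2]
    · refine Finset.sum_congr (by simp) fun y hy => ?_
      simp only [Finset.mem_filter, Bool.not_eq_true] at hy; simp [hy.2]
  rw [hsum]
  obtain ⟨y0, _, hy0⟩ : ∃ y ∈ Finset.univ, 0 < P y := by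
    by_contra hcon
    push_neg at hcon
    have : (∑ y, P y) = 0 := Finset.sum_eq_zero fun y hy =>
      le_antisymm (hcon y hy) (hP y)
    rw [this] at hP1; norm_num at hP1
  refine Finset.sum_pos' (fun y _ => ?_) ⟨y0, Finset.mem_univ y0, ?_⟩
  · exact mul_nonneg (by split <;> [exact (hβp y).le; exact (hβm y).le]) (hP y)
  · exact mul_pos (by split <;> [exact hβp y0; exact hβm y0]) hy0

theorem stmt11 (c : ℕ) (hc : 1 ≤ c)
    (βp βm : (Fin c → Bool) → ℝ) (hβp : ∀ y, 0 < βp y) (hβm : ∀ y, 0 < βm y)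
    (P : (Fin c → Bool) → ℝ) (hP : ∀ y, 0 ≤ P y) (hP1 : (∑ y, P y) = 1)
    (fstar : Fin c → ℝ)
    (hfstar : ∀ j, fstar j = (phiP βp P j - phiM βm P j) / (phiP βp P j + phiM βm P j)) :
    (∀ f : Fin c → ℝ,
        risk βp βm (fun z => (max 0 (1 - z)) ^ 2) P fstar ≤
          risk βp βm (fun z => (max 0 (1 - z)) ^ 2) P f) ∧
      risk βp βm (fun z => (max 0 (1 - z)) ^ 2) P fstar =
        (∑ j, 4 * phiP βp P j * phiM βm P j / (phiP βp P j + phiM βm P j)) ∧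
      ((∀ j, 0 < phiP βp P j ∧ 0 < phiM βm P j) →
        ∀ f : Fin c → ℝ,
          (∀ g : Fin c → ℝ,
              risk βp βm (fun z => (max 0 (1 - z)) ^ 2) P f ≤
                risk βp βm (fun z => (max 0 (1 - z)) ^ 2) P g) →
            f = fstar) := by
  have ha : ∀ j, 0 ≤ phiP βp P j := phiP_nonneg βp P hβp hP
  have hb : ∀ j, 0 ≤ phiM βm P j := phiM_nonneg βm P hβm hP
  have hab : ∀ j, 0 < phiP βp P j + phiM βm P j :=
    phi_sum_pos βp βm P hβp hβm hP hP1
  have hre : ∀ f : Fin c → ℝ, risk βp βm (fun z => (max 0 (1 - z)) ^ 2) P f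
      = ∑ j, (phiP βp P j * (max 0 (1 - f j))^2 + phiM βm P j * (max 0 (1 + f j))^2) := by
    intro f
    rw [risk_eq]
    refine Finset.sum_congr rfl fun j _ => ?_
    simp [sub_neg_eq_add]
  have hval : risk βp βm (fun z => (max 0 (1 - z)) ^ 2) P fstar
      = ∑ j, 4 * phiP βp P j * phiM βm P j / (phiP βp P j + phiM βm P j) := by
    rw [hre]
    refine Finset.sum_congr rfl fun j _ => ?_
    rw [hfstar j]
    have := key_eq (phiP βp P j) (phiM βm P j) (ha j) (hb j) (hab j)
    linarith [this]
  have hmin : ∀ f : Fin c → ℝ,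
      risk βp βm (fun z => (max 0 (1 - z)) ^ 2) P fstar ≤
        risk βp βm (fun z => (max 0 (1 - z)) ^ 2) P f := by
    intro f
    rw [hval, hre]
    refine Finset.sum_le_sum fun j _ => ?_
    have := key_lb (phiP βp P j) (phiM βm P j) (f j) (ha j) (hb j) (hab j)
    linarith [this]
  refine ⟨hmin, hval, fun hpos f hf => ?_⟩
  have heq : risk βp βm (fun z => (max 0 (1 - z)) ^ 2) P f
      = risk βp βm (fun z => (max 0 (1 - z)) ^ 2) P fstar :=
    le_antisymm (hf fstar) (hmin f)
  have hzero : ∑ j, ((phiP βp P j * (max 0 (1 - f j))^2 + phiM βm P j * (max 0 (1 + f j))^2)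
      - 4 * phiP βp P j * phiM βm P j / (phiP βp P j + phiM βm P j)) = 0 := by
    rw [Finset.sum_sub_distrib, ← hre, ← hval, heq, sub_self]
  have hterm : ∀ j ∈ Finset.univ,
      ((phiP βp P j * (max 0 (1 - f j))^2 + phiM βm P j * (max 0 (1 + f j))^2)
      - 4 * phiP βp P j * phiM βm P j / (phiP βp P j + phiM βm P j)) = 0 := by
    rw [← Finset.sum_eq_zero_iff_of_nonneg]
    · exact hzero
    · intro j _
      have := key_lb (phiP βp P j) (phiM βm P j) (f j) (ha j) (hb j) (hab j)
      have h4 : 4 * phiP βp P j * phiM βm P j / (phiP βp P j + phiM βm P j)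
          = 4 * phiP βp P j * phiM βm P j / (phiP βp P j + phiM βm P j) := rfl
      simp only [sub_nonneg]
      calc 4 * phiP βp P j * phiM βm P j / (phiP βp P j + phiM βm P j)
          = 4 * (phiP βp P j) * (phiM βm P j) / (phiP βp P j + phiM βm P j) := by ring_nf
        _ ≤ _ := by linarith [this]
  funext j
  have hj := hterm j (Finset.mem_univ j)
  rw [hfstar j]
  refine key_uniq (phiP βp P j) (phiM βm P j) (f j) (hpos j).1 (hpos j).2 ?_
  linarith [hj]
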